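/- Let θ_t ∈ [ε, 1-ε] evolve by θ_{t+1} = clip(θ_t - η_t·δ_t, ε, 1-ε) with η_t > 0, Σ_t η_t = ∞, and δ_t ≥ δ·(θ_t - ε) for some δ > 0 (drift strictly negative whenever θ_t > ε). Then θ_t → ε as t → ∞. -/

import Mathlib

/-- The clipped recursion `θ_{t+1} = clip(θ_t - η_t·δ_t, ε, 1-ε)` with
`δ_t ≥ δ·(θ_t - ε)`, `δ > 0`, `η_t > 0` and `Σ η_t = ∞` converges to `ε`. -/
theorem stmt13 (ε δ : ℝ) (η d θ : ℕ → ℝ)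
    (hε : 0 < ε) (hδ : 0 < δ)
    (hη : ∀ t, 0 < η t)
    (hηsum : Filter.Tendsto (fun n => ∑ t ∈ Finset.range n, η t) Filter.atTop Filter.atTop)
    (hθ0 : θ 0 ∈ Set.Icc ε (1 - ε))
    (hdrift : ∀ t, δ * (θ t - ε) ≤ d t)
    (hrec : ∀ t, θ (t + 1) = max ε (min (θ t - η t * d t) (1 - ε))) :
    Filter.Tendsto θ Filter.atTop (nhds ε) := by
  obtain ⟨h0l, h0u⟩ := hθ0
  -- bounds
  have hbound : ∀ t, ε ≤ θ t ∧ θ t ≤ 1 - ε := by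
    intro t
    induction t with
    | zero => exact ⟨h0l, h0u⟩
    | succ n ih =>
      rw [hrec n]
      constructor
      · exact le_max_left _ _
      · exact max_le (h0l.trans h0u) (min_le_right _ _)
  have hd0 : ∀ t, 0 ≤ d t := fun t =>
    le_trans (by nlinarith [(hbound t).1]) (hdrift t)
  have hrec' : ∀ t, θ (t + 1) = max ε (θ t - η t * d t) := by
    intro t
    rw [hrec t, min_eq_left]
    have := mul_nonneg (hη t).le (hd0 t)
    linarith [(hbound t).2]
  have hanti : Antitone θ := by
    apply antitone_nat_of_succ_le
    intro n
    rw [hrec' n]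
    have := mul_nonneg (hη n).le (hd0 n)
    exact max_le (hbound n).1 (by linarith)
  have hbdd : BddBelow (Set.range θ) := ⟨ε, fun x ⟨t, ht⟩ => ht ▸ (hbound t).1⟩
  set L := ⨅ n, θ n with hL
  have htend : Filter.Tendsto θ Filter.atTop (nhds L) :=
    tendsto_atTop_ciInf hanti hbdd
  have hLge : ∀ t, L ≤ θ t := fun t => ciInf_le hbdd t
  have hεL : ε ≤ L := le_ciInf fun t => (hbound t).1
  rcases eq_or_lt_of_le hεL with h | h
  · rwa [← h] at htend
  -- derive contradiction from ε < L
  exfalso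
  have key : ∀ n, θ n ≤ θ 0 - δ * (L - ε) * ∑ t ∈ Finset.range n, η t := by
    intro n
    induction n with
    | zero => simp
    | succ m ih =>
      have h1 : ε < θ (m + 1) := lt_of_lt_of_le h (hLge (m + 1))
      have h2 : θ (m + 1) = θ m - η m * d m := by
        rw [hrec' m] at h1 ⊢
        rcases max_cases ε (θ m - η m * d m) with ⟨he, _⟩ | ⟨he, _⟩
        · rw [he] at h1; exact absurd h1 (lt_irrefl ε)
        · exact he
      have h3 : δ * (L - ε) ≤ d m := by
        have := hdrift m
        have := hLge m
        nlinarith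
      have h4 : η m * (δ * (L - ε)) ≤ η m * d m :=
        mul_le_mul_of_nonneg_left h3 (hη m).le
      rw [Finset.sum_range_succ]
      rw [h2]
      nlinarith
  obtain ⟨N, hN⟩ := (Filter.tendsto_atTop.mp hηsum ((θ 0 - ε) / (δ * (L - ε)) + 1)).exists
  have hpos : 0 < δ * (L - ε) := by nlinarith
  have := key N
  have hS : (θ 0 - ε) / (δ * (L - ε)) + 1 ≤ ∑ t ∈ Finset.range N, η t := hN
  have : θ N < ε := by
    have h5 : θ 0 - ε < δ * (L - ε) * ∑ t ∈ Finset.range N, η t := by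
      calc θ 0 - ε < δ * (L - ε) * ((θ 0 - ε) / (δ * (L - ε)) + 1) := by
            rw [mul_add, mul_div_cancel₀ _ hpos.ne']; nlinarith
        _ ≤ δ * (L - ε) * ∑ t ∈ Finset.range N, η t :=
            mul_le_mul_of_nonneg_left hS hpos.le
    linarith [key N]
  linarith [(hbound N).1]
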